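/- Let C₁ ⊆ F₂ⁿ be a code with pairwise relative distance at least δ (Δ(z,z') ≥ δ for all distinct z, z' ∈ C₁), where δ > 0 and δ·n ≥ 4. Let s = ⌊δn/2⌋ and let φ : F₂ⁿ → F₂ⁿ be the linear projection that sets the last s coordinates to 0 and leaves the first n − s coordinates unchanged. Then the code C₁' = φ(C₁) satisfies: (i) |C₁'| = |C₁| (φ is injective on C₁); (ii) Δ(z,z') ≥ δ/2 for all distinct z, z' ∈ C₁'; and (iii) bias(z − z') ≤ 1 − δ/2 for all distinct z, z' ∈ C₁', where bias(w) := |E_{i∈[n]} (−1)^{w_i}|. -/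

import Mathlib

open Finset

/-- Relative Hamming distance between two words (uniform measure on coordinates). -/
noncomputable def relHam {m : Type*} [Fintype m] {α : Type*} [DecidableEq α]
    (x y : m → α) : ℝ :=
  ((Finset.univ.filter fun j => x j ≠ y j).card : ℝ) / (Fintype.card m : ℝ)

/-- The bias of a word over `F₂`: `|E_j (−1)^{z_j}|`. -/
noncomputable def bias2 {m : Type*} [Fintype m] (z : m → ZMod 2) : ℝ :=
  |∑ j, (-1 : ℝ) ^ (z j).val| / (Fintype.card m : ℝ)

/-- The linear projection that zeroes out the last `s` coordinates. -/
def zeroPad (n s : ℕ) (z : Fin n → ZMod 2) (i : Fin n) : ZMod 2 :=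
  if (i : ℕ) < n - s then z i else 0

/-- **Zero padding.** If `C₁ ⊆ F₂ⁿ` has pairwise relative distance at least `δ > 0` with
`δ·n ≥ 4`, and `φ` zeroes the last `⌊δn/2⌋` coordinates, then `φ` is injective on `C₁`,
the image code has pairwise distance at least `δ/2`, and the difference of any two
distinct codewords of the image has bias at most `1 − δ/2`. -/
theorem stmt_10 (n : ℕ) (δ : ℝ) (hδ : 0 < δ) (hδn : 4 ≤ δ * n)
    (C₁ : Set (Fin n → ZMod 2))
    (hdist : ∀ z ∈ C₁, ∀ z' ∈ C₁, z ≠ z' → δ ≤ relHam z z') :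
    Set.InjOn (zeroPad n ⌊δ * n / 2⌋₊) C₁
    ∧ (∀ z ∈ zeroPad n ⌊δ * n / 2⌋₊ '' C₁, ∀ z' ∈ zeroPad n ⌊δ * n / 2⌋₊ '' C₁,
        z ≠ z' → δ / 2 ≤ relHam z z')
    ∧ (∀ z ∈ zeroPad n ⌊δ * n / 2⌋₊ '' C₁, ∀ z' ∈ zeroPad n ⌊δ * n / 2⌋₊ '' C₁,
        z ≠ z' → bias2 (z - z') ≤ 1 - δ / 2) := by
  classical
  set s := ⌊δ * n / 2⌋₊ with hsdef
  have hn : 0 < n := by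
    rcases Nat.eq_zero_or_pos n with h | h
    · subst h; simp at hδn; linarith
    · exact h
  have hnR : (0:ℝ) < n := by exact_mod_cast hn
  have hsle : (s:ℝ) ≤ δ * n / 2 := Nat.floor_le (by positivity)
  have hsge : δ * n / 2 - 1 ≤ (s:ℝ) := by
    have := Nat.lt_floor_add_one (δ * n / 2)
    linarith
  -- at most s "high" coordinates
  have hhigh : ((univ.filter fun j : Fin n => ¬ ((j:ℕ) < n - s)).card) ≤ s := by
    have h1 : (univ.filter fun j : Fin n => ¬ ((j:ℕ) < n - s)).card
        ≤ (Finset.range s).card := by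
      refine Finset.card_le_card_of_injOn (fun j => (j:ℕ) - (n - s)) ?_ ?_
      · intro j hj
        simp only [Finset.mem_coe, Finset.mem_filter, Finset.mem_univ, true_and, not_lt] at hj
        simp only [Finset.mem_coe, Finset.mem_range]
        have := j.isLt
        omega
      · intro a ha b hb hab
        simp only [Finset.mem_coe, Finset.mem_filter, Finset.mem_univ, true_and,
          not_lt] at ha hb
        have hab' : (a:ℕ) - (n - s) = (b:ℕ) - (n - s) := hab
        have ha' := a.isLt; have hb' := b.isLt
        apply Fin.ext; omega
    simpa using h1
  -- key counting lemma
  have key : ∀ z ∈ C₁, ∀ z' ∈ C₁, z ≠ z' →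
      δ * n / 2 ≤ ((univ.filter fun j : Fin n =>
        zeroPad n s z j ≠ zeroPad n s z' j).card : ℝ) := by
    intro z hz z' hz' hne
    have hd := hdist z hz z' hz' hne
    rw [relHam, Fintype.card_fin] at hd
    have hD : δ * n ≤ ((univ.filter fun j => z j ≠ z' j).card : ℝ) := by
      rw [le_div_iff₀ hnR] at hd; linarith
    have hset : (univ.filter fun j : Fin n => zeroPad n s z j ≠ zeroPad n s z' j)
        = univ.filter (fun j => z j ≠ z' j ∧ (j:ℕ) < n - s) := by
      apply Finset.filter_congr
      intro j _
      unfold zeroPad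
      by_cases h : (j:ℕ) < n - s <;> simp [h]
    have hsub : univ.filter (fun j : Fin n => z j ≠ z' j)
        ⊆ univ.filter (fun j : Fin n => z j ≠ z' j ∧ (j:ℕ) < n - s)
          ∪ univ.filter (fun j : Fin n => ¬ ((j:ℕ) < n - s)) := by
      intro j hj
      simp only [Finset.mem_filter, Finset.mem_univ, true_and, Finset.mem_union] at hj ⊢
      tauto
    have hcard := (Finset.card_le_card hsub).trans (Finset.card_union_le _ _)
    rw [hset]
    have hcR : ((univ.filter fun j : Fin n => z j ≠ z' j).card : ℝ)
        ≤ ((univ.filter (fun j : Fin n => z j ≠ z' j ∧ (j:ℕ) < n - s)).card : ℝ)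
          + (s : ℝ) := by
      have : ((univ.filter fun j : Fin n => z j ≠ z' j).card : ℕ)
          ≤ (univ.filter (fun j : Fin n => z j ≠ z' j ∧ (j:ℕ) < n - s)).card + s :=
        hcard.trans (by omega)
      exact_mod_cast this
    linarith
  have hinj : Set.InjOn (zeroPad n s) C₁ := by
    intro z hz z' hz' heq
    by_contra hne
    have hk := key z hz z' hz' hne
    have hempty : (univ.filter fun j : Fin n =>
        zeroPad n s z j ≠ zeroPad n s z' j) = ∅ := by
      rw [heq]; simp
    rw [hempty] at hk
    simp at hk
    linarith
  refine ⟨hinj, ?_, ?_⟩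
  · rintro z ⟨a, ha, rfl⟩ z' ⟨b, hb, rfl⟩ hne
    have hab : a ≠ b := fun h => hne (by rw [h])
    have hk := key a ha b hb hab
    rw [relHam, Fintype.card_fin, le_div_iff₀ hnR]
    linarith
  · rintro z ⟨a, ha, rfl⟩ z' ⟨b, hb, rfl⟩ hne
    have hab : a ≠ b := fun h => hne (by rw [h])
    have hk := key a ha b hb hab
    set D := univ.filter fun j : Fin n => zeroPad n s a j ≠ zeroPad n s b j with hD
    -- δ ≤ 1
    have hδ1 : δ ≤ 1 := by
      have hd := hdist a ha b hb hab
      rw [relHam, Fintype.card_fin] at hd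
      have hcle : ((univ.filter fun j => a j ≠ b j).card : ℝ) ≤ n := by
        exact_mod_cast (Finset.card_filter_le _ _).trans (by simp)
      rw [le_div_iff₀ hnR] at hd
      nlinarith
    have hsn : s ≤ n := by
      have : (s:ℝ) ≤ (n:ℝ) := by nlinarith
      exact_mod_cast this
    -- D ⊆ low coordinates
    have hsub2 : D ⊆ univ.filter fun j : Fin n => (j:ℕ) < n - s := by
      intro j hj
      simp only [hD, Finset.mem_filter, Finset.mem_univ, true_and] at hj ⊢
      by_contra h
      simp [zeroPad, h] at hj
    have hle2 : (univ.filter fun j : Fin n => (j:ℕ) < n - s).card ≤ n - s := by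
      have h1 : (univ.filter fun j : Fin n => (j:ℕ) < n - s).card
          ≤ (Finset.range (n - s)).card := by
        refine Finset.card_le_card_of_injOn (fun j => (j:ℕ)) ?_ ?_
        · intro j hj
          simp only [Finset.mem_coe, Finset.mem_filter, Finset.mem_univ, true_and] at hj
          simpa using hj
        · intro x _ y _ hxy; exact Fin.ext hxy
      simpa using h1
    have hDle : (D.card : ℝ) ≤ (n:ℝ) - (s:ℝ) := by
      have h2 : D.card ≤ n - s := (Finset.card_le_card hsub2).trans hle2
      have h3 : ((n - s : ℕ) : ℝ) = (n:ℝ) - (s:ℝ) := by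
        rw [Nat.cast_sub hsn]
      calc (D.card : ℝ) ≤ ((n - s : ℕ) : ℝ) := by exact_mod_cast h2
        _ = (n:ℝ) - (s:ℝ) := h3
    -- compute the sum
    have hval1 : ∀ x : ZMod 2, x ≠ 0 → x.val = 1 := by decide
    have hsum : ∑ j, (-1:ℝ) ^ (((zeroPad n s a - zeroPad n s b)) j).val
        = ((n : ℝ) - D.card) - D.card := by
      rw [← Finset.sum_filter_add_sum_filter_not univ
        (fun j => zeroPad n s a j ≠ zeroPad n s b j)]
      have e1 : ∑ j ∈ univ.filter (fun j : Fin n =>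
          zeroPad n s a j ≠ zeroPad n s b j),
          (-1:ℝ) ^ (((zeroPad n s a - zeroPad n s b)) j).val = -(D.card : ℝ) := by
        have hc : ∀ j ∈ univ.filter (fun j : Fin n =>
            zeroPad n s a j ≠ zeroPad n s b j),
            (-1:ℝ) ^ (((zeroPad n s a - zeroPad n s b)) j).val = -1 := by
          intro j hj
          simp only [Finset.mem_filter, Finset.mem_univ, true_and] at hj
          have : (zeroPad n s a - zeroPad n s b) j ≠ 0 := by
            simpa [sub_eq_zero] using hj
          rw [hval1 _ this]; norm_num
        rw [Finset.sum_congr rfl hc, Finset.sum_const, nsmul_eq_mul, hD]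
        ring
      have e2 : ∑ j ∈ univ.filter (fun j : Fin n =>
          ¬ zeroPad n s a j ≠ zeroPad n s b j),
          (-1:ℝ) ^ (((zeroPad n s a - zeroPad n s b)) j).val
          = (n:ℝ) - D.card := by
        have hc : ∀ j ∈ univ.filter (fun j : Fin n =>
            ¬ zeroPad n s a j ≠ zeroPad n s b j),
            (-1:ℝ) ^ (((zeroPad n s a - zeroPad n s b)) j).val = 1 := by
          intro j hj
          simp only [Finset.mem_filter, Finset.mem_univ, true_and, not_not] at hj
          have : (zeroPad n s a - zeroPad n s b) j = 0 := by
            simpa [sub_eq_zero] using hj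
          rw [this]; simp
        have hcc := Finset.card_filter_add_card_filter_not
          (s := (univ : Finset (Fin n)))
          (p := fun j : Fin n => zeroPad n s a j ≠ zeroPad n s b j)
        simp only [Finset.card_univ, Fintype.card_fin] at hcc
        have hcard2 : (univ.filter (fun j : Fin n =>
            ¬ zeroPad n s a j ≠ zeroPad n s b j)).card = n - D.card := by
          rw [hD]; omega
        have hDn : D.card ≤ n := by
          have := Finset.card_filter_le (univ : Finset (Fin n))
            (fun j : Fin n => zeroPad n s a j ≠ zeroPad n s b j)
          simp only [Finset.card_univ, Fintype.card_fin] at this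
          simpa [hD] using this
        rw [Finset.sum_congr rfl hc, Finset.sum_const, hcard2, nsmul_eq_mul,
          mul_one, Nat.cast_sub hDn]
      rw [e1, e2]; ring
    rw [bias2, Fintype.card_fin, hsum, div_le_iff₀ hnR, abs_le]
    constructor
    · nlinarith
    · nlinarith
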